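/- Fix a rational p/q. Assume there are ε₀ > 0 and v₀ > 0 such that for all t ∈ I(p/q): (i) setting m_t = inf_{x∈ℝ}(F_t^{∘q}(x) − x − p) and M_t = sup_{x∈ℝ}(F_t^{∘q}(x) − x − p), one has M_t − m_t ≤ ε₀, and (ii) for all x ∈ ℝ the partial derivative ∂F_t^{∘q}(x)/∂t is ≥ v₀. Then ℓ_{p/q} ≤ ε₀/v₀. -/

import Mathlib

open Filter Real Set Topology

private lemma iter_comm_one' {f : ℝ → ℝ} (hf : ∀ x, f (x + 1) = f x + 1) (n : ℕ) :
    ∀ x, f^[n] (x + 1) = f^[n] x + 1 := by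
  induction n with
  | zero => simp
  | succ n ih =>
    intro x
    rw [Function.iterate_succ_apply, Function.iterate_succ_apply, hf, ih]

private lemma iter_ge' {G : ℝ → ℝ} {c : ℝ} (h : ∀ x, x + c ≤ G x) (n : ℕ) :
    ∀ x, x + n * c ≤ G^[n] x := by
  induction n with
  | zero => simp
  | succ n ih =>
    intro x
    have h1 := ih x
    have h2 := h (G^[n] x)
    rw [Function.iterate_succ_apply']
    push_cast
    linarith

private lemma iter_le' {G : ℝ → ℝ} {c : ℝ} (h : ∀ x, G x ≤ x + c) (n : ℕ) :
    ∀ x, G^[n] x ≤ x + n * c := by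
  induction n with
  | zero => simp
  | succ n ih =>
    intro x
    have h1 := ih x
    have h2 := h (G^[n] x)
    rw [Function.iterate_succ_apply']
    push_cast
    linarith

private lemma mul_tendsto_atTop' {q : ℕ} (hq : 0 < q) :
    Tendsto (fun n : ℕ => n * q) atTop atTop := by
  apply tendsto_atTop_atTop_of_monotone
  · intro a b hab
    exact Nat.mul_le_mul_right q hab
  · intro b
    exact ⟨b, Nat.le_mul_of_pos_right b hq⟩

private lemma trans_ge' {f : ℝ → ℝ} {q : ℕ} (hq : 0 < q) {L c : ℝ}
    (hT : Tendsto (fun n : ℕ => (f^[n] 0 - 0) / n) atTop (𝓝 L))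
    (h : ∀ x, x + c ≤ f^[q] x) : c / q ≤ L := by
  have hsub : Tendsto (fun n : ℕ => (f^[n * q] 0 - 0) / (↑(n * q) : ℝ)) atTop (𝓝 L) :=
    hT.comp (mul_tendsto_atTop' hq)
  refine ge_of_tendsto hsub ?_
  filter_upwards [eventually_ge_atTop 1] with n hn
  have hiter : (0 : ℝ) + n * c ≤ f^[n * q] 0 := by
    rw [mul_comm n q, Function.iterate_mul]
    exact iter_ge' h n 0
  have hq' : (0 : ℝ) < q := Nat.cast_pos.mpr hq
  have hn' : (0 : ℝ) < n := by exact_mod_cast hn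
  have hnq : (0 : ℝ) < (↑(n * q) : ℝ) := by
    push_cast; positivity
  rw [le_div_iff₀ hnq]
  have hcalc : c / ↑q * (↑(n * q) : ℝ) = ↑n * c := by
    push_cast
    field_simp
  rw [hcalc]
  linarith

private lemma trans_le' {f : ℝ → ℝ} {q : ℕ} (hq : 0 < q) {L c : ℝ}
    (hT : Tendsto (fun n : ℕ => (f^[n] 0 - 0) / n) atTop (𝓝 L))
    (h : ∀ x, f^[q] x ≤ x + c) : L ≤ c / q := by
  have hsub : Tendsto (fun n : ℕ => (f^[n * q] 0 - 0) / (↑(n * q) : ℝ)) atTop (𝓝 L) :=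
    hT.comp (mul_tendsto_atTop' hq)
  refine le_of_tendsto hsub ?_
  filter_upwards [eventually_ge_atTop 1] with n hn
  have hiter : f^[n * q] 0 ≤ (0 : ℝ) + n * c := by
    rw [mul_comm n q, Function.iterate_mul]
    exact iter_le' h n 0
  have hq' : (0 : ℝ) < q := Nat.cast_pos.mpr hq
  have hn' : (0 : ℝ) < n := by exact_mod_cast hn
  have hnq : (0 : ℝ) < (↑(n * q) : ℝ) := by
    push_cast; positivity
  rw [div_le_div_iff₀ hnq hq']
  push_cast
  nlinarith

private lemma periodic_facts {φ : ℝ → ℝ} (hc : Continuous φ) (hp : Function.Periodic φ 1) :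
    BddAbove (Set.range φ) ∧ BddBelow (Set.range φ) ∧ ∃ x₁, ∀ x, φ x ≤ φ x₁ := by
  have hval : ∀ x, φ x = φ (Int.fract x) := by
    intro x
    have h := hp.sub_int_mul_eq (x := x) ⌊x⌋
    rw [mul_one] at h
    exact h.symm
  have hrange : Set.range φ ⊆ φ '' Set.Icc (0 : ℝ) 1 := by
    rintro _ ⟨x, rfl⟩
    exact ⟨Int.fract x, ⟨Int.fract_nonneg x, (Int.fract_lt_one x).le⟩, (hval x).symm⟩
  have hcpt : IsCompact (φ '' Set.Icc (0 : ℝ) 1) := isCompact_Icc.image hc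
  obtain ⟨x₁, hx₁, hmax⟩ := isCompact_Icc.exists_isMaxOn (Set.nonempty_Icc.mpr zero_le_one)
    hc.continuousOn
  refine ⟨hcpt.bddAbove.mono hrange, hcpt.bddBelow.mono hrange, x₁, fun x => ?_⟩
  rw [hval x]
  exact hmax ⟨Int.fract_nonneg x, (Int.fract_lt_one x).le⟩

/-- Lemma 1 of the paper: if on the interval `I(p/q)` the oscillation of
`x ↦ F_t^{∘q}(x) - x - p` is at most `ε₀` and the `t`-derivative of
`F_t^{∘q}(x)` is at least `v₀`, then the length of `I(p/q)` is at most `ε₀/v₀`. -/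
theorem length_interval_le_of_osc_le_of_deriv_ge
    (F : ℝ → ℝ)
    (hFanal : ∀ x : ℝ, AnalyticAt ℝ F x)
    (hFmono : StrictMono F)
    (hFbij : Function.Bijective F)
    (hFderiv : ∀ x : ℝ, 0 < deriv F x)
    (hFper : ∀ x : ℝ, F (x + 1) = F x + 1)
    -- translation numbers of the translated family `F_t = F + t`
    (T : ℝ → ℝ)
    (hT : ∀ t x : ℝ, Tendsto (fun n : ℕ => ((fun y => F y + t)^[n] x - x) / n)
      atTop (𝓝 (T t)))
    -- a rational number `p/q` in lowest terms
    (p : ℤ) (q : ℕ) (hq : 0 < q) (hcop : Nat.Coprime p.natAbs q)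
    -- `I(p/q)` is the closed interval `[tmin, tmax]`
    (tmin tmax : ℝ) (hle : tmin ≤ tmax)
    (hI : {t : ℝ | T t = (p : ℝ) / (q : ℝ)} = Set.Icc tmin tmax)
    (ε₀ v₀ : ℝ) (hε₀ : 0 < ε₀) (hv₀ : 0 < v₀)
    -- (i) the oscillation `M_t - m_t` of `x ↦ F_t^{∘q}(x) - x - p` is at most `ε₀`
    (hosc : ∀ t ∈ Set.Icc tmin tmax,
      (⨆ x : ℝ, ((fun y => F y + t)^[q] x - x - (p : ℝ))) -
        (⨅ x : ℝ, ((fun y => F y + t)^[q] x - x - (p : ℝ))) ≤ ε₀)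
    -- (ii) the `t`-derivative of `F_t^{∘q}(x)` is at least `v₀`
    (hderiv : ∀ t ∈ Set.Icc tmin tmax, ∀ x : ℝ,
      v₀ ≤ deriv (fun s : ℝ => (fun y : ℝ => F y + s)^[q] x) t) :
    tmax - tmin ≤ ε₀ / v₀ := by
  have hq' : (0 : ℝ) < q := Nat.cast_pos.mpr hq
  have hFcont : Continuous F := continuous_iff_continuousAt.mpr fun x => (hFanal x).continuousAt
  have hfc : ∀ t : ℝ, Continuous fun y => F y + t := fun t => hFcont.add continuous_const
  have hGp : ∀ t x : ℝ, (fun y => F y + t)^[q] (x + 1) = (fun y => F y + t)^[q] x + 1 := by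
    intro t
    refine iter_comm_one' (fun x => ?_) q
    simp only [hFper]
    ring
  have hφc : ∀ t : ℝ, Continuous fun x => (fun y => F y + t)^[q] x - x - (p : ℝ) :=
    fun t => (((hfc t).iterate q).sub continuous_id).sub continuous_const
  have hφp : ∀ t : ℝ, Function.Periodic (fun x => (fun y => F y + t)^[q] x - x - (p : ℝ)) 1 := by
    intro t x
    simp only [hGp t x]
    ring
  have hfacts := fun t : ℝ => periodic_facts (hφc t) (hφp t)
  -- translation numbers at the endpoints
  have htmin : T tmin = (p : ℝ) / q := by
    have h : tmin ∈ Set.Icc tmin tmax := ⟨le_refl _, hle⟩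
    rw [← hI] at h
    exact h
  have htmax : T tmax = (p : ℝ) / q := by
    have h : tmax ∈ Set.Icc tmin tmax := ⟨hle, le_refl _⟩
    rw [← hI] at h
    exact h
  -- Claim 1: there is a point where `F_tmin^[q] x - x - p ≥ 0`
  have hx₀ : ∃ x₀ : ℝ, 0 ≤ (fun y => F y + tmin)^[q] x₀ - x₀ - (p : ℝ) := by
    by_contra hcon
    push_neg at hcon
    obtain ⟨-, -, x₁, hmax⟩ := hfacts tmin
    have hub : ∀ x : ℝ, (fun y => F y + tmin)^[q] x ≤
        x + ((p : ℝ) + ((fun y => F y + tmin)^[q] x₁ - x₁ - (p : ℝ))) := by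
      intro x
      have := hmax x
      linarith
    have hled := trans_le' hq (hT tmin 0) hub
    rw [htmin, div_le_div_iff₀ hq' hq'] at hled
    have hneg := hcon x₁
    nlinarith
  obtain ⟨x₀, hx₀⟩ := hx₀
  -- lower bound at tmin
  have hlow : ∀ x : ℝ, -ε₀ ≤ (fun y => F y + tmin)^[q] x - x - (p : ℝ) := by
    intro x
    obtain ⟨hA, hB, -⟩ := hfacts tmin
    have h1 : (⨅ y : ℝ, ((fun y' => F y' + tmin)^[q] y - y - (p : ℝ))) ≤
        (fun y => F y + tmin)^[q] x - x - (p : ℝ) := ciInf_le hB x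
    have h2 : (fun y => F y + tmin)^[q] x₀ - x₀ - (p : ℝ) ≤
        ⨆ y : ℝ, ((fun y' => F y' + tmin)^[q] y - y - (p : ℝ)) := le_ciSup hA x₀
    have h3 := hosc tmin ⟨le_refl _, hle⟩
    linarith
  -- differentiability in t
  have hdiff : ∀ x : ℝ, ∀ t ∈ Set.Icc tmin tmax,
      DifferentiableAt ℝ (fun s : ℝ => (fun y : ℝ => F y + s)^[q] x) t := by
    intro x t ht
    by_contra hnd
    have h0 := hderiv t ht x
    rw [deriv_zero_of_not_differentiableAt hnd] at h0
    linarith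
  -- MVT estimate
  have hkey : ∀ x : ℝ,
      v₀ * (tmax - tmin) ≤ (fun y => F y + tmax)^[q] x - (fun y => F y + tmin)^[q] x := by
    intro x
    have hvdiff : ∀ t : ℝ, DifferentiableAt ℝ (fun s : ℝ => v₀ * s) t := by
      intro t
      exact (differentiableAt_id.const_mul v₀)
    have hmono : MonotoneOn (fun s : ℝ => (fun y : ℝ => F y + s)^[q] x - v₀ * s)
        (Set.Icc tmin tmax) := by
      apply monotoneOn_of_deriv_nonneg (convex_Icc _ _)
      · intro t ht
        exact (((hdiff x t ht).sub (hvdiff t)).continuousAt).continuousWithinAt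
      · intro t ht
        rw [interior_Icc] at ht
        exact ((hdiff x t (Set.Ioo_subset_Icc_self ht)).sub (hvdiff t)).differentiableWithinAt
      · intro t ht
        rw [interior_Icc] at ht
        have ht' := Set.Ioo_subset_Icc_self ht
        rw [deriv_fun_sub (hdiff x t ht') (hvdiff t)]
        have hdv : deriv (fun s : ℝ => v₀ * s) t = v₀ := by
          rw [deriv_const_mul _ differentiableAt_fun_id]
          simp
        rw [hdv]
        have := hderiv t ht' x
        linarith
    have h := hmono ⟨le_refl _, hle⟩ ⟨hle, le_refl _⟩ hle
    simp only at h
    linarith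
  -- conclusion
  have hfinal : ∀ x : ℝ,
      x + ((p : ℝ) + (v₀ * (tmax - tmin) - ε₀)) ≤ (fun y => F y + tmax)^[q] x := by
    intro x
    have h1 := hkey x
    have h2 := hlow x
    linarith
  have hged := trans_ge' hq (hT tmax 0) hfinal
  rw [htmax, div_le_div_iff₀ hq' hq'] at hged
  rw [le_div_iff₀ hv₀]
  nlinarith
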